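/- In the binary case K = 2 with correct label 1 and t := z₁ − z₂, the sparsemax loss reduces to the modified Huber loss: L(t) = 0 if t ≥ 1, L(t) = −t if t ≤ −1, and L(t) = (t−1)²/4 if −1 < t < 1; moreover this function is continuous, convex, and differentiable everywhere. -/

import Mathlib

private lemma sqmax_deriv (x : ℝ) : HasDerivAt (fun y : ℝ => max 0 y ^ 2) (2 * max 0 x) x := by
  rcases lt_trichotomy x 0 with hx | hx | hx
  · have hcongr : (fun y : ℝ => max 0 y ^ 2) =ᶠ[nhds x] (fun _ => (0:ℝ)) := by
      filter_upwards [Iio_mem_nhds hx] with y hy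
      simp [max_eq_left (le_of_lt (Set.mem_Iio.mp hy))]
    have := (hasDerivAt_const x (0:ℝ)).congr_of_eventuallyEq hcongr
    simpa [max_eq_left hx.le] using this
  · subst hx
    rw [hasDerivAt_iff_tendsto_slope]
    have h0 : (2 : ℝ) * max 0 0 = 0 := by simp
    rw [h0]
    refine squeeze_zero_norm' (a := fun y => |y|) ?_ ?_
    · filter_upwards [self_mem_nhdsWithin] with y hy
      rw [slope_def_field]
      rcases le_or_gt y 0 with h | h
      · simp [max_eq_left h, abs_nonneg]
      · rw [max_eq_right h.le]
        have hy0 : y - 0 ≠ 0 := by simpa using ne_of_gt h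
        have : (y ^ 2 - max 0 0 ^ 2) / (y - 0) = y := by
          simp only [max_self]
          field_simp
          ring
        rw [this]
        simp [Real.norm_eq_abs]
    · have : Filter.Tendsto (fun y : ℝ => |y|) (nhds 0) (nhds 0) := by
        simpa using continuous_abs.tendsto (0:ℝ)
      exact this.mono_left nhdsWithin_le_nhds
  · have hcongr : (fun y : ℝ => max 0 y ^ 2) =ᶠ[nhds x] (fun y => y ^ 2) := by
      filter_upwards [Ioi_mem_nhds hx] with y hy
      simp [max_eq_right (le_of_lt (Set.mem_Ioi.mp hy))]
    have hq : HasDerivAt (fun y : ℝ => y ^ 2) (2 * x) x := by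
      simpa using hasDerivAt_pow 2 x
    have := hq.congr_of_eventuallyEq hcongr
    simpa [max_eq_right hx.le] using this

private lemma hasDerivAt_mh (x : ℝ) :
    HasDerivAt (fun t : ℝ => ((max 0 (1 - t)) ^ 2 - (max 0 (-1 - t)) ^ 2) / 4)
      ((max 0 (-1 - x) - max 0 (1 - x)) / 2) x := by
  have h1 : HasDerivAt (fun t : ℝ => max 0 (1 - t) ^ 2) (2 * max 0 (1 - x) * (-1)) x := by
    have hin : HasDerivAt (fun t : ℝ => 1 - t) (-1) x := by
      simpa using (hasDerivAt_id x).const_sub 1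
    exact (sqmax_deriv (1 - x)).comp x hin
  have h2 : HasDerivAt (fun t : ℝ => max 0 (-1 - t) ^ 2) (2 * max 0 (-1 - x) * (-1)) x := by
    have hin : HasDerivAt (fun t : ℝ => -1 - t) (-1) x := by
      simpa using (hasDerivAt_id x).const_sub (-1)
    exact (sqmax_deriv (-1 - x)).comp x hin
  have := (h1.sub h2).div_const 4
  exact this.congr_deriv (by ring)

private lemma mh_eq (h : ℝ → ℝ)
    (hh : ∀ t, h t = if 1 ≤ t then 0 else if t ≤ -1 then -t else (t - 1) ^ 2 / 4) :
    h = fun t : ℝ => ((max 0 (1 - t)) ^ 2 - (max 0 (-1 - t)) ^ 2) / 4 := by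
  funext t
  rw [hh t]
  split_ifs with h1 h2
  · rw [max_eq_left (by linarith), max_eq_left (by linarith)]
    ring
  · rw [max_eq_right (by linarith), max_eq_right (by linarith)]
    ring
  · push_neg at h1 h2
    rw [max_eq_right (by linarith), max_eq_left (by linarith)]
    ring

private lemma mh_deriv_mono :
    Monotone (fun x : ℝ => (max 0 (-1 - x) - max 0 (1 - x)) / 2) := by
  intro a b hab
  simp only [max_def]
  split_ifs <;> linarith

theorem stmt19 (τ : (Fin 2 → ℝ) → ℝ)
    (hτ : ∀ w : Fin 2 → ℝ, (∑ j, max 0 (w j - τ w)) = 1)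
    (h : ℝ → ℝ)
    (hh : ∀ t, h t = if 1 ≤ t then 0 else if t ≤ -1 then -t else (t - 1) ^ 2 / 4) :
    (∀ z : Fin 2 → ℝ,
      -z 0 + (1 / 2) * ∑ j ∈ Finset.univ.filter (fun j => τ z < z j),
        (z j ^ 2 - τ z ^ 2) + 1 / 2 = h (z 0 - z 1)) ∧
    Continuous h ∧ ConvexOn ℝ Set.univ h ∧ Differentiable ℝ h := by
  have hfun := mh_eq h hh
  have hder : ∀ x, HasDerivAt h ((max 0 (-1 - x) - max 0 (1 - x)) / 2) x := by
    intro x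
    rw [hfun]
    exact hasDerivAt_mh x
  have hdiff : Differentiable ℝ h := fun x => (hder x).differentiableAt
  have hconv : ConvexOn ℝ Set.univ h := by
    apply Monotone.convexOn_univ_of_deriv hdiff
    have : deriv h = fun x => (max 0 (-1 - x) - max 0 (1 - x)) / 2 := by
      funext x; exact (hder x).deriv
    rw [this]
    exact mh_deriv_mono
  refine ⟨?_, hdiff.continuous, hconv, hdiff⟩
  intro z
  have hE := hτ z
  rw [Fin.sum_univ_two] at hE
  rw [Finset.sum_filter, Fin.sum_univ_two]
  rcases le_or_gt 1 (z 0 - z 1) with h1 | h1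
  · -- t ≥ 1 : τ z = z 0 - 1
    have hx : z 0 - τ z = 1 := by
      rcases le_or_gt (z 0 - τ z) 0 with hx0 | hx0
      · rw [max_eq_left hx0, max_eq_left (by linarith)] at hE
        linarith
      · rcases le_or_gt (z 1 - τ z) 0 with hy | hy
        · rw [max_eq_right hx0.le, max_eq_left hy] at hE
          linarith
        · rw [max_eq_right hx0.le, max_eq_right hy.le] at hE
          linarith
    rw [if_pos (by linarith : τ z < z 0), if_neg (by intro hc; linarith : ¬ τ z < z 1)]
    rw [hh, if_pos h1]
    linear_combination ((z 0 + τ z - 1) / 2) * hx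
  rcases le_or_gt (z 0 - z 1) (-1) with h2 | h2
  · -- t ≤ -1 : τ z = z 1 - 1
    have hx : z 1 - τ z = 1 := by
      rcases le_or_gt (z 1 - τ z) 0 with hy0 | hy0
      · rw [max_eq_left hy0, max_eq_left (by linarith)] at hE
        linarith
      · rcases le_or_gt (z 0 - τ z) 0 with hx0 | hx0
        · rw [max_eq_right hy0.le, max_eq_left hx0] at hE
          linarith
        · rw [max_eq_right hy0.le, max_eq_right hx0.le] at hE
          linarith
    rw [if_neg (by intro hc; linarith : ¬ τ z < z 0), if_pos (by linarith : τ z < z 1)]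
    rw [hh, if_neg (by linarith), if_pos h2]
    linear_combination ((z 1 + τ z - 1) / 2) * hx
  · -- -1 < t < 1 : both coordinates in support
    have hx0 : 0 < z 0 - τ z := by
      by_contra hc
      push_neg at hc
      rw [max_eq_left hc] at hE
      rcases le_or_gt (z 1 - τ z) 0 with hy | hy
      · rw [max_eq_left hy] at hE; linarith
      · rw [max_eq_right hy.le] at hE; linarith
    have hy0 : 0 < z 1 - τ z := by
      by_contra hc
      push_neg at hc
      rw [max_eq_left hc, max_eq_right hx0.le] at hE
      linarith
    rw [max_eq_right hx0.le, max_eq_right hy0.le] at hE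
    rw [if_pos (by linarith : τ z < z 0), if_pos (by linarith : τ z < z 1)]
    rw [hh, if_neg (by linarith), if_neg (by linarith)]
    linear_combination ((z 0 + z 1 - 1 + 2 * τ z) / 4) * hE
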